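/- For all constants D ≥ 0, k ≥ 1, c ≥ 0 there exist L = L(D,k,c) and constants k', c' depending only on D, k, c, such that every (L;D;k,c)-local strongly contracting quasi-geodesic in a geodesic metric space is a (k',c')-quasi-geodesic whose image is a D-strongly contracting subset. -/

import Mathlib

universe u

/-- A metric space is *injective* (hyperconvex) if every family of closed balls that
pairwise intersect (i.e. `dist xᵢ xⱼ ≤ rᵢ + rⱼ` for `i ≠ j`) has a common point.
Families are encoded as sets of (center, radius) pairs. -/
def IsInjectiveSpace (X : Type u) [MetricSpace X] : Prop :=
  ∀ s : Set (X × ℝ), (∀ p ∈ s, 0 ≤ p.2) →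
    (∀ p ∈ s, ∀ q ∈ s, p ≠ q → dist p.1 q.1 ≤ p.2 + q.2) →
    ∃ z : X, ∀ p ∈ s, dist z p.1 ≤ p.2

/-- `γ : [0, dist x y] → X` is a geodesic from `x` to `y`. -/
def IsGeodesicSegment {X : Type u} [MetricSpace X] (γ : ℝ → X) (x y : X) : Prop :=
  γ 0 = x ∧ γ (dist x y) = y ∧
    ∀ s ∈ Set.Icc (0 : ℝ) (dist x y), ∀ t ∈ Set.Icc (0 : ℝ) (dist x y),
      dist (γ s) (γ t) = |s - t|

/-- A metric space is geodesic if any two points are joined by a geodesic. -/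
def IsGeodesicSpace (X : Type u) [MetricSpace X] : Prop :=
  ∀ x y : X, ∃ γ : ℝ → X, IsGeodesicSegment γ x y

/-- `γ` restricted to `I ⊆ ℝ` is a `(k, c)`-quasi-geodesic. -/
def IsQuasiGeodesicOn {X : Type u} [MetricSpace X] (k c : ℝ) (γ : ℝ → X) (I : Set ℝ) : Prop :=
  ∀ s ∈ I, ∀ t ∈ I,
    (1 / k) * |s - t| - c ≤ dist (γ s) (γ t) ∧ dist (γ s) (γ t) ≤ k * |s - t| + c

/-- A subset `Y` is `M`-Morse if every `(k, c)`-quasi-geodesic with endpoints on `Y`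
stays in the `M k c`-neighborhood of `Y`. -/
def IsMorse {X : Type u} [MetricSpace X] (M : ℝ → ℝ → ℝ) (Y : Set X) : Prop :=
  ∀ k c : ℝ, 1 ≤ k → 0 ≤ c → ∀ a b : ℝ, ∀ γ : ℝ → X,
    IsQuasiGeodesicOn k c γ (Set.Icc a b) → γ a ∈ Y → γ b ∈ Y →
    ∀ t ∈ Set.Icc a b, Metric.infDist (γ t) Y ≤ M k c

/-- The coarse closest-point projection `π_Y(x) = {y ∈ Y : d(x,y) ≤ d(x,Y) + 1}`. -/
def coarseProj {X : Type u} [MetricSpace X] (Y : Set X) (x : X) : Set X :=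
  {y | y ∈ Y ∧ dist x y ≤ Metric.infDist x Y + 1}

/-- `Y` is `D`-strongly contracting: for every closed ball `B` disjoint from `Y`,
the projection `π_Y(B)` has diameter at most `D`. -/
def IsStronglyContracting {X : Type u} [MetricSpace X] (D : ℝ) (Y : Set X) : Prop :=
  ∀ (c : X) (r : ℝ), Disjoint (Metric.closedBall c r) Y →
    ∀ x₁ ∈ Metric.closedBall c r, ∀ x₂ ∈ Metric.closedBall c r,
      ∀ y₁ ∈ coarseProj Y x₁, ∀ y₂ ∈ coarseProj Y x₂, dist y₁ y₂ ≤ D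

/-- `γ : I → X` is an `(L; D; k, c)`-local strongly contracting quasi-geodesic:
every subsegment of length at most `L` is a `(k,c)`-quasi-geodesic with
`D`-strongly contracting image. -/
def IsLocalSCQuasiGeodesic {X : Type u} [MetricSpace X] (L D k c : ℝ) (γ : ℝ → X)
    (I : Set ℝ) : Prop :=
  ∀ s t : ℝ, s ≤ t → Set.Icc s t ⊆ I → t - s ≤ L →
    IsQuasiGeodesicOn k c γ (Set.Icc s t) ∧ IsStronglyContracting D (γ '' Set.Icc s t)

/-- `γ : I → X` is a `(B; M; k, c)`-local Morse quasi-geodesic. -/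
def IsLocalMorseQuasiGeodesic {X : Type u} [MetricSpace X] (B : ℝ) (M : ℝ → ℝ → ℝ)
    (k c : ℝ) (γ : ℝ → X) (I : Set ℝ) : Prop :=
  ∀ s t : ℝ, s ≤ t → Set.Icc s t ⊆ I → t - s ≤ B →
    IsQuasiGeodesicOn k c γ (Set.Icc s t) ∧ IsMorse M (γ '' Set.Icc s t)

/-- The Morse local-to-global property. -/
def HasMorseLocalToGlobal (X : Type u) [MetricSpace X] : Prop :=
  ∀ (M : ℝ → ℝ → ℝ) (k c : ℝ), 1 ≤ k → 0 ≤ c →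
    ∃ (B : ℝ) (M' : ℝ → ℝ → ℝ) (k' c' : ℝ), 0 ≤ B ∧ 1 ≤ k' ∧ 0 ≤ c' ∧
      ∀ I : Set ℝ, I.OrdConnected → ∀ γ : ℝ → X,
        IsLocalMorseQuasiGeodesic B M k c γ I →
        IsQuasiGeodesicOn k' c' γ I ∧ IsMorse M' (γ '' I)

/-- `A` satisfies Gromov's 4-point condition with constant `C`. -/
def Gromov4 {X : Type u} [MetricSpace X] (C : ℝ) (A : Set X) : Prop :=
  ∀ x ∈ A, ∀ y ∈ A, ∀ w ∈ A, ∀ z ∈ A,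
    dist x y + dist w z ≤ max (dist x z + dist w y) (dist x w + dist y z) + C


set_option linter.unusedSectionVars false

namespace LocSC

open Metric Set

noncomputable section ConstDefs

def C1 (D : ℝ) : ℝ := 3*D + 8
def C0 (D : ℝ) : ℝ := 3*D + 9
def gg (D k c : ℝ) : ℝ := k*(2*(C0 D) + c + 1)
def HM (D k c : ℝ) : ℝ := C0 D + k*(gg D k c) + c
def C5 (D k c : ℝ) : ℝ := 2*(HM D k c) + 2*(C0 D)
def C6 (D k c : ℝ) : ℝ := C5 D k c + C0 D
def Bet (D k c : ℝ) : ℝ := C6 D k c + 2*c + 12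
def Aa (D k c : ℝ) : ℝ := Bet D k c + C0 D
def Rr (D k c : ℝ) : ℝ := k*k*(Aa D k c + c) + k + 5*(Aa D k c + C6 D k c + c + 25)
def Gg (D k c : ℝ) : ℝ := k*(Rr D k c + c) + 1
def del (D k c : ℝ) : ℝ := Rr D k c - c - 1 - C6 D k c
def Ps (D k c : ℝ) : ℝ := k*(D + c) + 6*(Gg D k c) + 2
def Ll (D k c : ℝ) : ℝ := 4*(Ps D k c) + 100*(Gg D k c) + 10
def kk (k c : ℝ) : ℝ := 5*k + c + 1
def cc (D k c : ℝ) : ℝ := Ll D k c + 2*(Rr D k c) + C6 D k c + c + 10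

end ConstDefs

section ConstFacts

variable {D k c : ℝ} (hD : 0 ≤ D) (hk : 1 ≤ k) (hc : 0 ≤ c)

include hD in
lemma hC0 : 9 ≤ C0 D := by unfold C0; linarith

include hD hk hc in
lemma hgg0 : 0 ≤ gg D k c := by
  have := hC0 hD; unfold gg; nlinarith

include hD hk hc in
lemma hHM : C0 D ≤ HM D k c := by
  have h1 := hgg0 hD hk hc
  unfold HM; nlinarith

include hD hk hc in
lemma hHM0 : 0 ≤ HM D k c := le_trans (by linarith [hC0 hD]) (hHM hD hk hc)

include hD hk hc in
lemma hC50 : 0 ≤ C5 D k c := by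
  have := hHM0 hD hk hc; have := hC0 hD; unfold C5; linarith

include hD hk hc in
lemma hC60 : 0 ≤ C6 D k c := by
  have := hC50 hD hk hc; have := hC0 hD; unfold C6; linarith

include hD hk hc in
lemma hBet : C6 D k c + 2*c + 12 ≤ Bet D k c := le_of_eq rfl

include hD hk hc in
lemma hBet0 : 12 ≤ Bet D k c := by
  have := hC60 hD hk hc; unfold Bet; linarith

include hD hk hc in
lemma hAa0 : 0 ≤ Aa D k c := by
  have := hBet0 hD hk hc; have := hC0 hD; unfold Aa; linarith

include hD hk hc in
lemma hAaC0 : C0 D ≤ Aa D k c := by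
  have := hBet0 hD hk hc; unfold Aa; linarith

include hD hk hc in
lemma hRr5 : 5*(Aa D k c + C6 D k c + c + 25) ≤ Rr D k c := by
  have h1 := hAa0 hD hk hc
  unfold Rr; nlinarith

include hD hk hc in
lemma hRr0 : 125 ≤ Rr D k c := by
  have h1 := hRr5 hD hk hc
  have := hAa0 hD hk hc; have := hC60 hD hk hc; linarith

include hD hk hc in
lemma hEta : k*(k*(Aa D k c + c) + 1) + c ≤ Rr D k c := by
  have h1 := hAa0 hD hk hc; have h2 := hC60 hD hk hc
  unfold Rr; nlinarith

include hD hk hc in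
lemma hdel1 : 1 ≤ del D k c := by
  have h1 := hRr5 hD hk hc
  have := hAa0 hD hk hc; have := hC60 hD hk hc
  unfold del; linarith

include hD hk hc in
lemma hdelC6 : C6 D k c + 21 ≤ del D k c := by
  have h1 := hRr5 hD hk hc
  have := hAa0 hD hk hc; have := hC60 hD hk hc
  unfold del; linarith

include hD hk hc in
lemma hdel5 : Rr D k c + c + 1 ≤ 5*(del D k c) := by
  have h1 := hRr5 hD hk hc
  have := hAa0 hD hk hc; have := hC60 hD hk hc
  unfold del; linarith

include hD hk hc in
lemma hGg1 : 1 ≤ Gg D k c := by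
  have h1 := hRr0 hD hk hc
  unfold Gg; nlinarith

include hD hk hc in
lemma hggG : gg D k c ≤ Gg D k c := by
  have h1 : 2*(C0 D) + 1 ≤ Rr D k c := by
    have := hRr5 hD hk hc
    have h2 := hAaC0 hD hk hc
    have := hC60 hD hk hc
    have := hC0 hD
    linarith
  have h2 : k*(2*(C0 D) + c + 1) ≤ k*(Rr D k c + c) :=
    mul_le_mul_of_nonneg_left (by linarith) (by linarith)
  unfold gg Gg; linarith

include hD hk hc in
lemma hGdel : Gg D k c ≤ kk k c * del D k c := by
  have h1 : k*(Rr D k c + c + 1) ≤ k*(5*(del D k c)) :=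
    mul_le_mul_of_nonneg_left (hdel5 hD hk hc) (by linarith)
  have h2 : k*(5*(del D k c)) ≤ kk k c * del D k c := by
    have hd := hdel1 hD hk hc
    have : (5*k) * del D k c ≤ kk k c * del D k c :=
      mul_le_mul_of_nonneg_right (by unfold kk; linarith) (by linarith)
    nlinarith
  have : Gg D k c ≤ k*(Rr D k c + c + 1) := by unfold Gg; nlinarith
  linarith

include hD hk hc in
lemma hdelR : del D k c ≤ Rr D k c := by
  have := hC60 hD hk hc; unfold del; linarith

include hD hk hc in
lemma hPs0 : 3*(Gg D k c) ≤ Ps D k c := by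
  have := hGg1 hD hk hc
  unfold Ps; nlinarith

include hD hk hc in
lemma hL2G : 2*(Gg D k c) ≤ Ll D k c := by
  have h1 := hPs0 hD hk hc; have := hGg1 hD hk hc
  unfold Ll; nlinarith

include hD hk hc in
lemma hL1 : 1 ≤ Ll D k c := by
  have h1 := hPs0 hD hk hc; have := hGg1 hD hk hc
  unfold Ll; nlinarith

include hD hk hc in
lemma hLbig : 2*(Ps D k c) + 40*(Gg D k c) + 1 ≤ Ll D k c := by
  have h1 := hPs0 hD hk hc; have := hGg1 hD hk hc
  unfold Ll; nlinarith

end ConstFacts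


section Basic

variable {X : Type u} [MetricSpace X]

lemma le_infDist' {Y : Set X} (hY : Y.Nonempty) {x : X} {b : ℝ}
    (h : ∀ y ∈ Y, b ≤ dist x y) : b ≤ Metric.infDist x Y := by
  by_contra hlt
  push_neg at hlt
  obtain ⟨y, hy, hd⟩ := (Metric.infDist_lt_iff hY).1 hlt
  exact absurd (h y hy) (by linarith)

lemma cp_nonempty {Y : Set X} (hY : Y.Nonempty) (x : X) : (coarseProj Y x).Nonempty := by
  obtain ⟨y, hy, hd⟩ := (Metric.infDist_lt_iff hY).1
    (lt_add_one (Metric.infDist x Y))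
  exact ⟨y, hy, hd.le⟩

lemma cp_subset {W Y : Set X} (hWY : W ⊆ Y) {x y : X}
    (h : y ∈ coarseProj Y x) (hyW : y ∈ W) : y ∈ coarseProj W x :=
  ⟨hyW, h.2.trans (add_le_add_left
    (Metric.infDist_le_infDist_of_subset hWY ⟨y, hyW⟩) 1)⟩

lemma geo_pt (hX : IsGeodesicSpace X) (x p : X) {ρ : ℝ} (h0 : 0 ≤ ρ)
    (h1 : ρ ≤ dist x p) : ∃ z : X, dist x z = ρ ∧ dist z p = dist x p - ρ := by
  obtain ⟨g, hg0, hg1, hiso⟩ := hX x p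
  refine ⟨g ρ, ?_, ?_⟩
  · have h := hiso 0 ⟨le_refl 0, dist_nonneg⟩ ρ ⟨h0, h1⟩
    rw [hg0] at h
    rw [h]
    rw [abs_of_nonpos (by linarith)]; ring
  · have h := hiso ρ ⟨h0, h1⟩ (dist x p) ⟨dist_nonneg, le_refl _⟩
    rw [hg1] at h
    rw [h, abs_of_nonpos (by linarith)]; ring

/-- The key projection lemma for strongly contracting sets:
if `y` is a coarse projection of `x` and `p ∈ Y`, then
`dist y p ≤ dist x p - d(x,Y) + C1`. -/
lemma TT (hX : IsGeodesicSpace X) {D : ℝ} (hD : 0 ≤ D) {Y : Set X} (hY : Y.Nonempty)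
    (hcon : IsStronglyContracting D Y) :
    ∀ n : ℕ, ∀ x p : X, p ∈ Y → ∀ y, y ∈ coarseProj Y x → dist x p ≤ n →
      dist y p ≤ dist x p - Metric.infDist x Y + C1 D := by
  intro n
  induction n with
  | zero =>
    intro x p hp y hy hn
    push_cast at hn
    have hr : Metric.infDist x Y ≤ dist x p := Metric.infDist_le_dist_of_mem hp
    have hxy : dist x y ≤ Metric.infDist x Y + 1 := hy.2
    have h0 : 0 ≤ Metric.infDist x Y := Metric.infDist_nonneg
    have : dist y p ≤ dist y x + dist x p := dist_triangle _ _ _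
    rw [dist_comm y x] at this
    unfold C1
    nlinarith [dist_nonneg (x := x) (y := p)]
  | succ n ih =>
    intro x p hp y hy hn
    set r := Metric.infDist x Y with hrdef
    have hr0 : 0 ≤ r := Metric.infDist_nonneg
    have hrp : r ≤ dist x p := Metric.infDist_le_dist_of_mem hp
    have hxy : dist x y ≤ r + 1 := hy.2
    by_cases hbig : r ≤ D + 3
    · have : dist y p ≤ dist y x + dist x p := dist_triangle _ _ _
      rw [dist_comm y x] at this
      unfold C1
      nlinarith
    · push_neg at hbig
      obtain ⟨x', hx'1, hx'2⟩ := geo_pt hX x p (ρ := r - 1) (by linarith) (by linarith)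
      have hdisj : Disjoint (Metric.closedBall x (r - 1)) Y := by
        rw [Set.disjoint_left]
        intro w hw hwY
        have h1 : r ≤ dist x w := Metric.infDist_le_dist_of_mem hwY
        have h2 : dist w x ≤ r - 1 := Metric.mem_closedBall.1 hw
        rw [dist_comm] at h2
        linarith
      obtain ⟨y'', hy''⟩ := cp_nonempty hY x'
      have hD2 : dist y y'' ≤ D := by
        refine hcon x (r - 1) hdisj x ?_ x' ?_ y hy y'' hy''
        · exact Metric.mem_closedBall.2 (by rw [dist_self]; linarith)
        · exact Metric.mem_closedBall.2 (by rw [dist_comm]; rw [hx'1])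
      set r' := Metric.infDist x' Y with hr'def
      have hr'1 : 1 ≤ r' := by
        have : r ≤ r' + dist x x' := Metric.infDist_le_infDist_add_dist
        rw [hx'1] at this
        linarith
      have hr'p : r' ≤ dist x' p := Metric.infDist_le_dist_of_mem hp
      by_cases hbig' : r' ≤ D + 3
      · have h1 : dist x' y'' ≤ r' + 1 := hy''.2
        have h2 : dist y'' p ≤ dist y'' x' + dist x' p := dist_triangle _ _ _
        rw [dist_comm y'' x'] at h2
        have h3 : dist y p ≤ dist y y'' + dist y'' p := dist_triangle _ _ _
        unfold C1
        nlinarith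
      · push_neg at hbig'
        have hih := ih x' p hp y'' hy'' (by push_cast; push_cast at hn; linarith)
        have h3 : dist y p ≤ dist y y'' + dist y'' p := dist_triangle _ _ _
        unfold C1 at *
        nlinarith

/-- Gate inequality: geodesic-wise, the coarse projection lies "between". -/
lemma gate (hX : IsGeodesicSpace X) {D : ℝ} (hD : 0 ≤ D) {Y : Set X} (hY : Y.Nonempty)
    (hcon : IsStronglyContracting D Y) {x y p : X}
    (hy : y ∈ coarseProj Y x) (hp : p ∈ Y) :
    dist x y + dist y p ≤ dist x p + C0 D := by
  obtain ⟨n, hn⟩ := exists_nat_ge (dist x p)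
  have h1 := TT hX hD hY hcon n x p hp y hy hn
  have h2 : dist x y ≤ Metric.infDist x Y + 1 := hy.2
  unfold C1 at h1; unfold C0
  linarith

end Basic


section Windows

variable {X : Type u} [MetricSpace X] {D k c : ℝ} {γ : ℝ → X} {I : Set ℝ}

lemma winQG_low (hI : I.OrdConnected) (hγ : IsLocalSCQuasiGeodesic (Ll D k c) D k c γ I)
    {u v : ℝ} (hu : u ∈ I) (hv : v ∈ I) (huv : u ≤ v) (hlen : v - u ≤ Ll D k c) :
    (1/k)*(v-u) - c ≤ dist (γ u) (γ v) := by
  have h := (hγ u v huv (hI.out hu hv) hlen).1 u ⟨le_refl u, huv⟩ v ⟨huv, le_refl v⟩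
  have h1 := h.1
  rwa [abs_of_nonpos (by linarith), neg_sub] at h1

lemma winQG_up (hI : I.OrdConnected) (hγ : IsLocalSCQuasiGeodesic (Ll D k c) D k c γ I)
    {u v : ℝ} (hu : u ∈ I) (hv : v ∈ I) (huv : u ≤ v) (hlen : v - u ≤ Ll D k c) :
    dist (γ u) (γ v) ≤ k*(v-u) + c := by
  have h := (hγ u v huv (hI.out hu hv) hlen).1 u ⟨le_refl u, huv⟩ v ⟨huv, le_refl v⟩
  have h1 := h.2
  rwa [abs_of_nonpos (by linarith), neg_sub] at h1

lemma param_close (hk : 1 ≤ k) (hc : 0 ≤ c) (hI : I.OrdConnected)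
    (hγ : IsLocalSCQuasiGeodesic (Ll D k c) D k c γ I)
    {a b : ℝ} (ha : a ∈ I) (hb : b ∈ I) (hlen : b - a ≤ Ll D k c)
    {u v : ℝ} (hu : u ∈ Icc a b) (hv : v ∈ Icc a b) {e : ℝ} (he : 0 ≤ e)
    (hd : dist (γ u) (γ v) ≤ e) : |u - v| ≤ k*(e + c) := by
  have hsub := hI.out ha hb
  wlog huv : u ≤ v generalizing u v with Hw
  · push_neg at huv
    rw [abs_sub_comm]
    exact Hw hv hu (by rwa [dist_comm]) huv.le
  rw [abs_of_nonpos (by linarith), neg_sub]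
  have hlow := winQG_low hI hγ (hsub hu) (hsub hv) huv
    (by obtain ⟨h1, h2⟩ := hu; obtain ⟨h3, h4⟩ := hv; linarith)
  have hk0 : (0:ℝ) < k := by linarith
  have hmain : (1/k)*(v-u) ≤ e + c := by linarith
  calc v - u = k * ((1/k)*(v-u)) := by field_simp
  _ ≤ k*(e+c) := mul_le_mul_of_nonneg_left hmain (le_of_lt hk0)

/-- Morse-type lemma within a window: distances along the window from the left
endpoint do not overshoot the distance to the right endpoint by more than `HM`. -/
lemma morse (hX : IsGeodesicSpace X) (hD : 0 ≤ D) (hk : 1 ≤ k) (hc : 0 ≤ c)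
    (hI : I.OrdConnected) (hγ : IsLocalSCQuasiGeodesic (Ll D k c) D k c γ I)
    {a b : ℝ} (ha : a ∈ I) (hb : b ∈ I) (hab : a ≤ b) (hlen : b - a ≤ Ll D k c) :
    ∀ v ∈ Icc a b, dist (γ a) (γ v) ≤ dist (γ a) (γ b) + HM D k c := by
  intro v hv
  set d0 := dist (γ a) (γ b) with hd0
  have hd00 : 0 ≤ d0 := dist_nonneg
  have hsub : Icc a b ⊆ I := hI.out ha hb
  have hcon : IsStronglyContracting D (γ '' Icc a b) := (hγ a b hab hsub hlen).2
  have hYne : (γ '' Icc a b).Nonempty := ⟨γ a, a, ⟨le_refl a, hab⟩, rfl⟩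
  obtain ⟨g, hg0, hg1, hiso⟩ := hX (γ a) (γ b)
  have claim : ∀ θ : ℝ, θ ∈ Icc (0:ℝ) d0 → ∃ t', t' ∈ Icc a b ∧
      dist (g θ) (γ t') ≤ C0 D ∧ dist (γ a) (γ t') ≤ θ + C0 D := by
    intro θ hθ
    obtain ⟨y, hy⟩ := cp_nonempty hYne (g θ)
    obtain ⟨t', ht', hyt⟩ := hy.1
    have hga : dist (g θ) (γ a) = θ := by
      have h := hiso 0 ⟨le_refl 0, hd00⟩ θ hθ
      rw [hg0] at h
      rw [dist_comm, h, abs_of_nonpos (by linarith [hθ.1])]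
      ring
    have hgb : dist (g θ) (γ b) = d0 - θ := by
      have h := hiso θ hθ d0 ⟨hd00, le_refl _⟩
      rw [hg1] at h
      rw [h, abs_of_nonpos (by linarith [hθ.2])]
      ring
    have hgate1 := gate hX hD hYne hcon hy
      (show γ a ∈ γ '' Icc a b from ⟨a, ⟨le_refl a, hab⟩, rfl⟩)
    have hgate2 := gate hX hD hYne hcon hy
      (show γ b ∈ γ '' Icc a b from ⟨b, ⟨hab, le_refl b⟩, rfl⟩)
    rw [hga] at hgate1
    rw [hgb] at hgate2
    have htri : d0 ≤ dist y (γ a) + dist y (γ b) := by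
      have h := dist_triangle (γ a) y (γ b)
      rw [dist_comm (γ a) y] at h
      linarith
    have hclose : dist (g θ) y ≤ C0 D := by linarith
    refine ⟨t', ht', ?_, ?_⟩
    · rw [hyt]; exact hclose
    · rw [hyt]
      have h := dist_triangle (γ a) (g θ) y
      rw [dist_comm (γ a) (g θ), hga] at h
      linarith
  set N := Nat.ceil d0 with hN
  choose F hF1 hF2 hF3 using fun i : ℕ =>
    claim (min (i:ℝ) d0) ⟨le_min (Nat.cast_nonneg i) hd00, min_le_right _ _⟩
  set un : ℕ → ℝ := fun i => if i = 0 then a else F i with hun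
  have hun0 : un 0 = a := rfl
  have hunI : ∀ i : ℕ, un i ∈ Icc a b := by
    intro i; by_cases h : i = 0
    · rw [h, hun0]; exact ⟨le_refl a, hab⟩
    · simp only [hun, if_neg h]; exact hF1 i
  have hunA : ∀ i : ℕ, dist (γ a) (γ (un i)) ≤ min (i:ℝ) d0 + C0 D := by
    intro i; by_cases h : i = 0
    · rw [h, hun0, dist_self]
      have h1 := hC0 hD
      have h2 : min ((0:ℕ):ℝ) d0 = 0 := by simp [hd00]
      rw [h2]; linarith
    · simp only [hun, if_neg h]; exact hF3 i
  have hunG : ∀ i : ℕ, dist (g (min (i:ℝ) d0)) (γ (un i)) ≤ C0 D := by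
    intro i; by_cases h : i = 0
    · rw [h, hun0]
      have h2 : min ((0:ℕ):ℝ) d0 = 0 := by simp [hd00]
      rw [h2, hg0, dist_self]; linarith [hC0 hD]
    · simp only [hun, if_neg h]; exact hF2 i
  have hstep : ∀ i : ℕ, |un (i+1) - un i| ≤ gg D k c := by
    intro i
    have t3 : dist (g (min (i:ℝ) d0)) (g (min ((i+1:ℕ):ℝ) d0)) ≤ 1 := by
      have e1 : min (i:ℝ) d0 ∈ Icc (0:ℝ) d0 :=
        ⟨le_min (Nat.cast_nonneg i) hd00, min_le_right _ _⟩
      have e2 : min ((i+1:ℕ):ℝ) d0 ∈ Icc (0:ℝ) d0 :=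
        ⟨le_min (Nat.cast_nonneg _) hd00, min_le_right _ _⟩
      have h := hiso _ e1 _ e2
      rw [h]
      have m1 : min (i:ℝ) d0 ≤ min ((i+1:ℕ):ℝ) d0 :=
        min_le_min (by push_cast; linarith) (le_refl _)
      have m2 : min ((i+1:ℕ):ℝ) d0 ≤ min (i:ℝ) d0 + 1 := by
        rw [← min_add_add_right]
        exact min_le_min (by push_cast; linarith) (by linarith)
      rw [abs_of_nonpos (by linarith)]
      linarith
    have h1 : dist (γ (un i)) (γ (un (i+1))) ≤ 2*(C0 D) + 1 := by
      have t1 := hunG i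
      have t2 := hunG (i+1)
      have h := dist_triangle4 (γ (un i)) (g (min (i:ℝ) d0))
        (g (min ((i+1:ℕ):ℝ) d0)) (γ (un (i+1)))
      rw [dist_comm (γ (un i)) (g (min (i:ℝ) d0))] at h
      linarith
    have h2 := param_close hk hc hI hγ ha hb hlen (hunI (i+1)) (hunI i)
      (e := 2*(C0 D) + 1) (by linarith [hC0 hD]) (by rwa [dist_comm])
    calc |un (i+1) - un i| ≤ k*((2*(C0 D) + 1) + c) := h2
    _ = gg D k c := by unfold gg; ring
  -- locate v
  classical
  set S := (Finset.range (N+1)).filter (fun i => un i ≤ v) with hS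
  have hS0 : 0 ∈ S := by
    rw [hS, Finset.mem_filter]
    exact ⟨Finset.mem_range.2 (Nat.succ_pos N), by rw [hun0]; exact hv.1⟩
  set i0 := S.max' ⟨0, hS0⟩ with hi0
  have hi0S : i0 ∈ S := Finset.max'_mem _ _
  have hi0N : i0 ≤ N := by
    have := (Finset.mem_filter.1 hi0S).1
    exact Nat.lt_succ_iff.1 (Finset.mem_range.1 this)
  have hi0v : un i0 ≤ v := (Finset.mem_filter.1 hi0S).2
  have hgap : v - un i0 ≤ gg D k c := by
    by_cases hiN : i0 = N
    · have hminN : min ((N:ℕ):ℝ) d0 = d0 := min_eq_right (Nat.le_ceil d0)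
      have h1 : dist (γ b) (γ (un N)) ≤ C0 D := by
        have := hunG N
        rw [hminN, hg1] at this
        exact this
      have h2 := param_close hk hc hI hγ ha hb hlen (hunI N) ⟨hab, le_refl b⟩
        (e := C0 D) (by linarith [hC0 hD]) (by rwa [dist_comm])
      have h3 : b - un N ≤ k*(C0 D + c) := by
        rw [abs_sub_comm] at h2
        have := le_abs_self (b - un N)
        linarith
      have h4 : k*(C0 D + c) ≤ gg D k c := by
        unfold gg
        have := hC0 hD
        have : (C0 D + c) ≤ (2*(C0 D) + c + 1) := by linarith
        exact mul_le_mul_of_nonneg_left this (by linarith)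
      rw [hiN]
      have := hv.2
      linarith
    · have hlt : i0 < N := lt_of_le_of_ne hi0N hiN
      have hnot : ¬ (un (i0+1) ≤ v) := by
        intro hcontra
        have hmem : i0 + 1 ∈ S := by
          rw [hS, Finset.mem_filter]
          exact ⟨Finset.mem_range.2 (by omega), hcontra⟩
        have := Finset.le_max' S _ hmem
        rw [← hi0] at this
        omega
      push_neg at hnot
      have h := hstep i0
      have := le_abs_self (un (i0+1) - un i0)
      linarith
  have hvI : v ∈ I := hsub hv
  have hup := winQG_up hI hγ (hsub (hunI i0)) hvI hi0v
    (by
      have hgG := hggG hD hk hc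
      have h2G := hL2G hD hk hc
      have hG1 := hGg1 hD hk hc
      linarith)
  have hfin := hunA i0
  have htri := dist_triangle (γ a) (γ (un i0)) (γ v)
  have hmin : min ((i0:ℕ):ℝ) d0 ≤ d0 := min_le_right _ _
  have hmul : k*(v - un i0) ≤ k*(gg D k c) :=
    mul_le_mul_of_nonneg_left hgap (by linarith)
  unfold HM
  linarith

end Windows


section TriBlocks

variable {X : Type u} [MetricSpace X] {D k c : ℝ} {γ : ℝ → X} {I : Set ℝ}

/-- Triple alignment within a window. -/
lemma tri (hX : IsGeodesicSpace X) (hD : 0 ≤ D) (hk : 1 ≤ k) (hc : 0 ≤ c)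
    (hI : I.OrdConnected) (hγ : IsLocalSCQuasiGeodesic (Ll D k c) D k c γ I)
    {u v w : ℝ} (hu : u ∈ I) (hw : w ∈ I) (huv : u ≤ v) (hvw : v ≤ w)
    (hlen : w - u ≤ Ll D k c) :
    dist (γ u) (γ v) + dist (γ v) (γ w) ≤ dist (γ u) (γ w) + C5 D k c := by
  have hv : v ∈ I := hI.out hu hw ⟨huv, hvw⟩
  have hsubvw : Icc v w ⊆ I := hI.out hv hw
  have hconY : IsStronglyContracting D (γ '' Icc v w) :=
    (hγ v w hvw hsubvw (by linarith)).2
  have hYne : (γ '' Icc v w).Nonempty := ⟨γ v, v, ⟨le_refl v, hvw⟩, rfl⟩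
  have hinf : dist (γ u) (γ v) - HM D k c ≤ Metric.infDist (γ u) (γ '' Icc v w) := by
    apply le_infDist' hYne
    rintro y ⟨q, hq, rfl⟩
    have hm := morse hX hD hk hc hI hγ hu (hsubvw hq) (le_trans huv hq.1)
      (by linarith [hq.2]) v ⟨huv, hq.1⟩
    linarith
  obtain ⟨y, hy⟩ := cp_nonempty hYne (γ u)
  have hyv := gate hX hD hYne hconY hy ⟨v, ⟨le_refl v, hvw⟩, rfl⟩
  have hyw := gate hX hD hYne hconY hy ⟨w, ⟨hvw, le_refl w⟩, rfl⟩
  have h1 : dist (γ u) (γ v) - HM D k c ≤ dist (γ u) y :=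
    le_trans hinf (Metric.infDist_le_dist_of_mem hy.1)
  have h2 : dist y (γ v) ≤ HM D k c + C0 D := by linarith
  have h3 : dist (γ v) (γ w) - dist y (γ v) ≤ dist y (γ w) := by
    have h := dist_triangle (γ v) y (γ w)
    rw [dist_comm (γ v) y] at h
    linarith
  unfold C5
  linarith

/-- Construction of the block subdivision. -/
lemma blocks_exist (hD : 0 ≤ D) (hk : 1 ≤ k) (hc : 0 ≤ c)
    (hI : I.OrdConnected) (hγ : IsLocalSCQuasiGeodesic (Ll D k c) D k c γ I)
    {a b : ℝ} (ha : a ∈ I) (hb : b ∈ I) (hab : a ≤ b) :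
    ∃ (M : ℕ) (τ : ℕ → ℝ), τ 0 = a ∧ τ (M+1) = b ∧
      (∀ m : ℕ, τ m ∈ Icc a b) ∧ (∀ m : ℕ, τ m ≤ τ (m+1)) ∧
      (∀ m : ℕ, τ (m+1) ≤ τ m + Gg D k c) ∧
      (∀ m : ℕ, ∀ v ∈ Icc (τ m) (τ (m+1)),
        dist (γ (τ m)) (γ v) ≤ Rr D k c + c + 1) ∧
      (∀ m : ℕ, m < M → Rr D k c - c - 1 ≤ dist (γ (τ m)) (γ (τ (m+1)))) ∧
      (∀ m : ℕ, m < M → τ m + (k*(Aa D k c + c) + 1) ≤ τ (m+1)) := by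
  classical
  have hk0 : (0:ℝ) < k := by linarith
  have hsub : Icc a b ⊆ I := hI.out ha hb
  have hG1 := hGg1 hD hk hc
  have hL1' := hL1 hD hk hc
  have hR0 := hRr0 hD hk hc
  have hA0 := hAa0 hD hk hc
  have hGL := hL2G hD hk hc
  -- G ≤ L
  have hGL1 : Gg D k c ≤ Ll D k c := by linarith
  set E : ℝ → Set ℝ :=
    fun p => {v | v ∈ Icc p b ∧ Rr D k c ≤ dist (γ p) (γ v)} with hE
  set τ : ℕ → ℝ :=
    fun n => Nat.rec a (fun _ p => if (E p).Nonempty then sInf (E p) else b) n with hτ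
  have hτ0 : τ 0 = a := rfl
  have hτs : ∀ m : ℕ, τ (m+1) = if (E (τ m)).Nonempty then sInf (E (τ m)) else b :=
    fun m => rfl
  have hEbdd : ∀ p, BddBelow (E p) := fun p => ⟨p, fun v hv => hv.1.1⟩
  have hEle : ∀ p, ∀ v ∈ E p, v ≤ b := fun p v hv => hv.1.2
  have hIcc : ∀ m : ℕ, τ m ∈ Icc a b := by
    intro m
    induction m with
    | zero => exact ⟨le_refl a, hab⟩
    | succ m ih =>
      rw [hτs m]
      by_cases h : (E (τ m)).Nonempty
      · rw [if_pos h]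
        obtain ⟨v, hv⟩ := h
        constructor
        · exact le_trans ih.1 (le_csInf ⟨v, hv⟩ (fun w hw => hw.1.1))
        · exact le_trans (csInf_le (hEbdd _) hv) (hEle _ v hv)
      · rw [if_neg h]; exact ⟨hab, le_refl b⟩
  have hmono : ∀ m : ℕ, τ m ≤ τ (m+1) := by
    intro m
    rw [hτs m]
    by_cases h : (E (τ m)).Nonempty
    · rw [if_pos h]; exact le_csInf h (fun w hw => hw.1.1)
    · rw [if_neg h]; exact (hIcc m).2
  -- membership of τ m + G in E when it fits
  have hGmem : ∀ m : ℕ, τ m + Gg D k c ≤ b → (τ m + Gg D k c) ∈ E (τ m) := by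
    intro m hfit
    refine ⟨⟨by linarith, hfit⟩, ?_⟩
    have hmI : τ m ∈ I := hsub (hIcc m)
    have hvI : τ m + Gg D k c ∈ I := hsub ⟨by linarith [(hIcc m).1], hfit⟩
    have hlow := winQG_low hI hγ hmI hvI (by linarith) (by linarith)
    have h1 : k*(Rr D k c + c) ≤ Gg D k c := by unfold Gg; linarith
    have h2 : (1/k)*(k*(Rr D k c + c)) ≤ (1/k)*(τ m + Gg D k c - τ m) := by
      apply mul_le_mul_of_nonneg_left _ (by positivity)
      linarith
    have h3 : (1/k)*(k*(Rr D k c + c)) = Rr D k c + c := by field_simp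
    linarith
  have hgap : ∀ m : ℕ, τ (m+1) ≤ τ m + Gg D k c := by
    intro m
    rw [hτs m]
    by_cases h : (E (τ m)).Nonempty
    · rw [if_pos h]
      by_cases hfit : τ m + Gg D k c ≤ b
      · exact csInf_le (hEbdd _) (hGmem m hfit)
      · push_neg at hfit
        obtain ⟨v, hv⟩ := h
        exact le_trans (csInf_le (hEbdd _) hv) (by linarith [hEle _ v hv])
    · rw [if_neg h]
      by_contra hcon
      push_neg at hcon
      exact h ⟨τ m + Gg D k c, hGmem m (by linarith)⟩
  -- interior bound
  have hintlt : ∀ m : ℕ, ∀ w, τ m ≤ w → w < τ (m+1) →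
      dist (γ (τ m)) (γ w) < Rr D k c := by
    intro m w h1 h2
    by_contra hcontra
    push_neg at hcontra
    have hwb : w ≤ b := le_trans h2.le (hIcc (m+1)).2
    have hwE : w ∈ E (τ m) := ⟨⟨h1, hwb⟩, hcontra⟩
    rw [hτs m, if_pos ⟨w, hwE⟩] at h2
    exact absurd (csInf_le (hEbdd _) hwE) (not_le.2 h2)
  have hB2 : ∀ m : ℕ, ∀ v ∈ Icc (τ m) (τ (m+1)),
      dist (γ (τ m)) (γ v) ≤ Rr D k c + c + 1 := by
    intro m v hv
    have hvb : v ≤ b := le_trans hv.2 (hIcc (m+1)).2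
    have hva : a ≤ v := le_trans (hIcc m).1 hv.1
    rcases lt_or_eq_of_le hv.2 with hlt | heq
    · linarith [hintlt m v hv.1 hlt]
    · by_cases hsmall : v - 1/(2*k) ≤ τ m
      · have hup := winQG_up hI hγ (hsub (hIcc m)) (hsub ⟨hva, hvb⟩) hv.1 (by
          have h1 : v - τ m ≤ 1/(2*k) := by linarith
          have h12 : 1/(2*k) ≤ 1 := by
            rw [div_le_one (by positivity)]; linarith
          linarith)
        have h1 : k*(v - τ m) ≤ k*(1/(2*k)) :=
          mul_le_mul_of_nonneg_left (by linarith) (by linarith)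
        have h2 : k*(1/(2*k)) = 1/2 := by field_simp
        linarith
      · push_neg at hsmall
        obtain ⟨w, hwdef⟩ : ∃ w : ℝ, w = v - 1/(2*k) := ⟨_, rfl⟩
        have hpos : (0:ℝ) < 1/(2*k) := by positivity
        have hsm : τ m < w := by rw [hwdef]; exact hsmall
        have hw2 : w < v := by rw [hwdef]; linarith
        have hwb : w ≤ b := le_trans hw2.le hvb
        have hwa : a ≤ w := le_trans (hIcc m).1 hsm.le
        have hd1 := hintlt m w hsm.le (heq ▸ hw2)
        have hvw' : v - w = 1/(2*k) := by rw [hwdef]; ring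
        have h12 : 1/(2*k) ≤ 1 := by
          rw [div_le_one (by positivity)]; linarith
        have hup := winQG_up hI hγ (hsub ⟨hwa, hwb⟩) (hsub ⟨hva, hvb⟩) hw2.le
          (by linarith)
        have h1 : k*(v - w) = 1/2 := by
          rw [hvw']; field_simp
        have htr := dist_triangle (γ (τ m)) (γ w) (γ v)
        linarith
  have hB1 : ∀ m : ℕ, (E (τ m)).Nonempty →
      Rr D k c - c - 1 ≤ dist (γ (τ m)) (γ (τ (m+1))) := by
    intro m h
    have hτm1 : τ (m+1) = sInf (E (τ m)) := by rw [hτs m, if_pos h]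
    obtain ⟨e, he, helt⟩ := Real.lt_sInf_add_pos h (show (0:ℝ) < 1/(2*k) by positivity)
    have h1 : τ (m+1) ≤ e := by rw [hτm1]; exact csInf_le (hEbdd _) he
    have heb : e ≤ b := hEle _ e he
    have hea : a ≤ e := le_trans (hIcc m).1 he.1.1
    have hup := winQG_up hI hγ (hsub (hIcc (m+1))) (hsub ⟨hea, heb⟩) h1 (by
      have h2 : e - τ (m+1) ≤ 1/(2*k) := by rw [hτm1]; linarith
      have h12 : 1/(2*k) ≤ 1 := by rw [div_le_one (by positivity)]; linarith
      linarith)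
    have h2 : k*(e - τ (m+1)) ≤ k*(1/(2*k)) := by
      apply mul_le_mul_of_nonneg_left _ (by linarith)
      rw [hτm1]; linarith
    have h3 : k*(1/(2*k)) = 1/2 := by field_simp
    have h4 : Rr D k c ≤ dist (γ (τ m)) (γ e) := he.2
    have htr := dist_triangle (γ (τ m)) (γ (τ (m+1))) (γ e)
    linarith
  have hstep1 : (1:ℝ) ≤ k*(Aa D k c + c) + 1 := by nlinarith
  have hB4 : ∀ m : ℕ, (E (τ m)).Nonempty →
      τ m + (k*(Aa D k c + c) + 1) ≤ τ (m+1) := by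
    intro m h
    rw [hτs m, if_pos h]
    apply le_csInf h
    intro v hv
    by_contra hlt
    push_neg at hlt
    have hvτ : τ m ≤ v := hv.1.1
    have hEta' := hEta hD hk hc
    have hfit : v - τ m ≤ Ll D k c := by
      have h1 : k*(Aa D k c + c) + 1 ≤ k*(k*(Aa D k c + c) + 1) := by nlinarith
      have h2 : k*(k*(Aa D k c + c) + 1) ≤ Rr D k c := by linarith
      have h3 : Rr D k c ≤ Gg D k c := by unfold Gg; nlinarith
      linarith
    have hup := winQG_up hI hγ (hsub (hIcc m))
      (hsub ⟨le_trans (hIcc m).1 hvτ, hEle _ v hv⟩) hvτ hfit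
    have h1 : k*(v - τ m) < k*(k*(Aa D k c + c) + 1) :=
      mul_lt_mul_of_pos_left (by linarith) hk0
    have h2 : k*(k*(Aa D k c + c) + 1) + c ≤ Rr D k c := hEta hD hk hc
    have h4 : Rr D k c ≤ dist (γ (τ m)) (γ v) := hv.2
    linarith
  have hex : ∃ m : ℕ, ¬ (E (τ m)).Nonempty := by
    by_contra hcon
    push_neg at hcon
    have hgrow : ∀ m : ℕ, a + m*(k*(Aa D k c + c) + 1) ≤ τ m := by
      intro m
      induction m with
      | zero => simp [hτ0]
      | succ m ih =>
        have := hB4 m (hcon m)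
        push_cast
        nlinarith
    obtain ⟨n, hn⟩ := exists_nat_gt (b - a)
    have h1 := hgrow n
    have h2 : τ n ≤ b := (hIcc n).2
    have h3 : (n:ℝ)*1 ≤ (n:ℝ)*(k*(Aa D k c + c) + 1) :=
      mul_le_mul_of_nonneg_left hstep1 (Nat.cast_nonneg n)
    linarith
  classical
  set M := Nat.find hex with hM
  have hMempty : ¬ (E (τ M)).Nonempty := Nat.find_spec hex
  have hMgen : ∀ m : ℕ, m < M → (E (τ m)).Nonempty := by
    intro m hm
    exact not_not.mp (Nat.find_min hex hm)
  have hMb : τ (M+1) = b := by rw [hτs M, if_neg hMempty]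
  exact ⟨M, τ, hτ0, hMb, hIcc, hmono, hgap, hB2,
    fun m hm => hB1 m (hMgen m hm), fun m hm => hB4 m (hMgen m hm)⟩

end TriBlocks


section Engine

variable {X : Type u} [MetricSpace X] {D k c : ℝ} {γ : ℝ → X} {I : Set ℝ}

/-- The main block-induction engine: distance to the image grows linearly. -/
lemma blocks_main (hX : IsGeodesicSpace X) (hD : 0 ≤ D) (hk : 1 ≤ k) (hc : 0 ≤ c)
    (hI : I.OrdConnected) (hγ : IsLocalSCQuasiGeodesic (Ll D k c) D k c γ I)
    (x : X) (σ : ℝ) (hσ0 : 0 ≤ σ) (hσ1 : σ ≤ 10)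
    {a b : ℝ} (ha : a ∈ I) (hb : b ∈ I) (hab : a ≤ b)
    (hnear : ∀ v ∈ Icc a b, dist x (γ a) - σ ≤ dist x (γ v)) :
    ∀ v ∈ Icc a b,
      dist x (γ a) - σ + ((v - a)/(Gg D k c) - 2)*(del D k c) - C6 D k c ≤ dist x (γ v) := by
  obtain ⟨M, τ, hτ0, hτM, hIcc, hmono, hgap, hB2, hB1, hB4⟩ :=
    blocks_exist hD hk hc hI hγ ha hb hab
  have hk0 : (0:ℝ) < k := by linarith
  have hsub : Icc a b ⊆ I := hI.out ha hb
  have hτI : ∀ m : ℕ, τ m ∈ I := fun m => hsub (hIcc m)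
  have hG1 := hGg1 hD hk hc
  have hG0 : (0:ℝ) < Gg D k c := by linarith
  have h2GL := hL2G hD hk hc
  have hC60' := hC60 hD hk hc
  have hC50' := hC50 hD hk hc
  have hC00 : (0:ℝ) ≤ C0 D := by linarith [hC0 hD]
  have hBet12 := hBet0 hD hk hc
  have hdel1' := hdel1 hD hk hc
  have hmono2 : ∀ m : ℕ, τ m ≤ τ (m+2) := fun m => le_trans (hmono m) (hmono (m+1))
  have hwin2 : ∀ m : ℕ, τ (m+2) - τ m ≤ Ll D k c := by
    intro m
    have := hgap m; have := hgap (m+1)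
    linarith
  have hBetC6 : C6 D k c + 2*c + 2 ≤ Bet D k c := by unfold Bet; linarith
  -- the derivation: (i)_j implies (ii)_j
  have derive : ∀ j : ℕ, j < M →
      (dist x (γ (τ j)) - Bet D k c ≤ Metric.infDist x (γ '' Icc (τ j) (τ (j+2)))) →
      (∀ v ∈ Icc (τ (j+1)) (τ (j+2)),
        dist x (γ (τ (j+1))) + dist (γ (τ (j+1))) (γ v) - C6 D k c ≤ dist x (γ v)) := by
    intro j hj hi
    have hZne : (γ '' Icc (τ j) (τ (j+2))).Nonempty :=
      ⟨γ (τ j), τ j, ⟨le_refl _, hmono2 j⟩, rfl⟩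
    have hconZ : IsStronglyContracting D (γ '' Icc (τ j) (τ (j+2))) :=
      (hγ (τ j) (τ (j+2)) (hmono2 j) (hI.out (hτI j) (hτI (j+2))) (hwin2 j)).2
    obtain ⟨y', hy'⟩ := cp_nonempty hZne x
    obtain ⟨q', hq'mem, hq'eq⟩ := hy'.1
    have hgate1 := gate hX hD hZne hconZ hy' ⟨τ j, ⟨le_refl _, hmono2 j⟩, rfl⟩
    have hxy' : Metric.infDist x (γ '' Icc (τ j) (τ (j+2))) ≤ dist x y' :=
      Metric.infDist_le_dist_of_mem hy'.1
    have hA : dist y' (γ (τ j)) ≤ Bet D k c + C0 D := by linarith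
    have hdq : dist (γ q') (γ (τ j)) ≤ Aa D k c := by
      rw [hq'eq]
      have : Aa D k c = Bet D k c + C0 D := rfl
      linarith
    have hA0' := hAa0 hD hk hc
    have hparam := param_close hk hc hI hγ (hτI j) (hτI (j+2)) (hwin2 j)
      hq'mem ⟨le_refl _, hmono2 j⟩ (e := Aa D k c) hA0' hdq
    have hq'le : q' ≤ τ (j+1) := by
      have h4 := hB4 j hj
      have habs : q' - τ j ≤ k*(Aa D k c + c) := by
        have := le_abs_self (q' - τ j)
        linarith [hparam]
      linarith
    intro v hv
    have hvmem : v ∈ Icc (τ j) (τ (j+2)) := ⟨le_trans (hmono j) hv.1, hv.2⟩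
    have hsubZ : Icc (τ j) (τ (j+2)) ⊆ I := hI.out (hτI j) (hτI (j+2))
    have htri1 := tri hX hD hk hc hI hγ (hsubZ hq'mem) (hsubZ hvmem) hq'le hv.1
      (by have := hwin2 j; have := hq'mem.1; have := hvmem.2; linarith)
    rw [hq'eq] at htri1
    have hgate2 := gate hX hD hZne hconZ hy' ⟨v, hvmem, rfl⟩
    have htri2 : dist x (γ (τ (j+1))) ≤ dist x y' + dist y' (γ (τ (j+1))) :=
      dist_triangle _ _ _
    have hC6eq : C6 D k c = C5 D k c + C0 D := rfl
    linarith
  -- main induction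
  have key : ∀ j : ℕ, j < M →
      (dist x (γ (τ j)) - Bet D k c ≤ Metric.infDist x (γ '' Icc (τ j) (τ (j+2)))) ∧
      (∀ v ∈ Icc (τ (j+1)) (τ (j+2)),
        dist x (γ (τ (j+1))) + dist (γ (τ (j+1))) (γ v) - C6 D k c ≤ dist x (γ v)) ∧
      (dist x (γ a) - σ + (j:ℝ)*(del D k c) ≤ dist x (γ (τ (j+1)))) := by
    intro j
    induction j with
    | zero =>
      intro hj
      have hi0 : dist x (γ (τ 0)) - Bet D k c ≤
          Metric.infDist x (γ '' Icc (τ 0) (τ 2)) := by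
        refine le_infDist' (show (γ '' Icc (τ 0) (τ 2)).Nonempty from
          ⟨γ (τ 0), τ 0, ⟨le_refl _, hmono2 0⟩, rfl⟩) ?_
        rintro y ⟨q, hq, rfl⟩
        have hqab : q ∈ Icc a b := by
          constructor
          · rw [← hτ0]; exact hq.1
          · exact le_trans hq.2 (hIcc 2).2
        have := hnear q hqab
        rw [hτ0]
        linarith
      refine ⟨hi0, derive 0 hj hi0, ?_⟩
      have := hnear (τ 1) (hIcc 1)
      push_cast
      linarith
    | succ j ih =>
      intro hj1
      have hjM : j < M := Nat.lt_of_succ_lt hj1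
      obtain ⟨hi, hii, hiv⟩ := ih hjM
      have hi1 : dist x (γ (τ (j+1))) - Bet D k c ≤
          Metric.infDist x (γ '' Icc (τ (j+1)) (τ (j+1+2))) := by
        refine le_infDist' (show (γ '' Icc (τ (j+1)) (τ (j+1+2))).Nonempty from
          ⟨γ (τ (j+1)), τ (j+1), ⟨le_refl _, hmono2 (j+1)⟩, rfl⟩) ?_
        rintro y ⟨q, hq, rfl⟩
        rcases le_total q (τ (j+2)) with hqle | hqge
        · have h1 := hii q ⟨hq.1, hqle⟩
          have h2 := dist_nonneg (x := γ (τ (j+1))) (y := γ q)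
          linarith
        · have e1 := hB2 (j+2) q ⟨hqge, hq.2⟩
          have e2 := hii (τ (j+2)) ⟨hmono (j+1), le_refl _⟩
          have e3 := hB1 (j+1) hj1
          have e4 := dist_triangle x (γ (τ (j+2))) (γ q)
          have e5 := dist_triangle x (γ q) (γ (τ (j+2)))
          rw [dist_comm (γ q) (γ (τ (j+2)))] at e5
          linarith
      refine ⟨hi1, derive (j+1) hj1 hi1, ?_⟩
      have e2 := hii (τ (j+2)) ⟨hmono (j+1), le_refl _⟩
      have e3 := hB1 (j+1) hj1
      have hdeleq : del D k c = Rr D k c - c - 1 - C6 D k c := rfl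
      push_cast
      nlinarith [hiv, e2, e3]
  -- consumption
  intro v hv
  classical
  have hdel0 : (0:ℝ) ≤ del D k c := by linarith
  have hgrow : ∀ n : ℕ, τ n ≤ a + n*(Gg D k c) := by
    intro n
    induction n with
    | zero => rw [hτ0]; push_cast; linarith
    | succ n ih =>
      have := hgap n
      push_cast
      push_cast at ih
      linarith
  set S := (Finset.range (M+1)).filter (fun m => τ m ≤ v) with hS
  have hS0 : 0 ∈ S := by
    rw [hS, Finset.mem_filter]
    refine ⟨Finset.mem_range.2 (Nat.succ_pos M), ?_⟩
    rw [hτ0]; exact hv.1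
  obtain ⟨m, hmS, hmax⟩ : ∃ m, m ∈ S ∧ ∀ j ∈ S, j ≤ m :=
    ⟨S.max' ⟨0, hS0⟩, Finset.max'_mem _ _, fun j hj => Finset.le_max' S j hj⟩
  have hmM : m ≤ M := Nat.lt_succ_iff.1 (Finset.mem_range.1 (Finset.mem_filter.1 hmS).1)
  have hmv : τ m ≤ v := (Finset.mem_filter.1 hmS).2
  have hvm1 : v ≤ τ (m+1) := by
    by_cases hcase : m = M
    · rw [hcase, hτM]; exact hv.2
    · by_contra hcon
      push_neg at hcon
      have hmem : m + 1 ∈ S := by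
        rw [hS, Finset.mem_filter]
        exact ⟨Finset.mem_range.2 (by omega), hcon.le⟩
      have := hmax _ hmem
      omega
  have hva : v - a ≤ ((m:ℝ)+1)*(Gg D k c) := by
    have h1 := hgrow (m+1)
    push_cast at h1
    linarith
  have hfrac : (v - a)/(Gg D k c) - 2 ≤ (m:ℝ) - 1 := by
    have h1 : (v - a)/(Gg D k c) ≤ (m:ℝ)+1 := by
      rw [div_le_iff₀ hG0]
      linarith
    linarith
  rcases Nat.eq_zero_or_pos m with hm0 | hmpos
  · have h1 := hnear v hv
    have h2 : (v - a)/(Gg D k c) - 2 ≤ -1 := by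
      rw [hm0] at hfrac
      push_cast at hfrac
      linarith
    have h3 : ((v - a)/(Gg D k c) - 2)*(del D k c) ≤ 0 :=
      mul_nonpos_of_nonpos_of_nonneg (by linarith) hdel0
    linarith
  · obtain ⟨n, rfl⟩ : ∃ n, m = n + 1 := ⟨m - 1, by omega⟩
    have hnM : n < M := by omega
    obtain ⟨_, hii, hiv⟩ := key n hnM
    have h1 := hii v ⟨hmv, hvm1⟩
    have h2 : ((v - a)/(Gg D k c) - 2)*(del D k c) ≤ (n:ℝ)*(del D k c) := by
      apply mul_le_mul_of_nonneg_right _ hdel0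
      push_cast at hfrac
      linarith
    have h3 := dist_nonneg (x := γ (τ (n+1))) (y := γ v)
    linarith

end Engine


section Loc

variable {X : Type u} [MetricSpace X] {D k c : ℝ} {γ : ℝ → X} {I : Set ℝ}

lemma loc (hX : IsGeodesicSpace X) (hD : 0 ≤ D) (hk : 1 ≤ k) (hc : 0 ≤ c)
    (hI : I.OrdConnected) (hγ : IsLocalSCQuasiGeodesic (Ll D k c) D k c γ I)
    (x : X) {σ : ℝ} (hσ0 : 0 ≤ σ) (hσ1 : σ ≤ 10)
    {a b : ℝ} (ha : a ∈ I) (hb : b ∈ I) (hab : a ≤ b)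
    (hnear : ∀ v ∈ Icc a b, dist x (γ a) - σ ≤ dist x (γ v))
    (hfar : dist x (γ b) ≤ dist x (γ a) + σ) : b - a ≤ 3*(Gg D k c) := by
  have h := blocks_main hX hD hk hc hI hγ x σ hσ0 hσ1 ha hb hab hnear b ⟨hab, le_refl b⟩
  have hG1 := hGg1 hD hk hc
  have hG0 : (0:ℝ) < Gg D k c := by linarith
  have hdC6 := hdelC6 hD hk hc
  have hC60' := hC60 hD hk hc
  have hdel0 : (0:ℝ) ≤ del D k c := by linarith
  by_contra hcon
  push_neg at hcon
  have h1 : (1:ℝ) ≤ (b - a)/(Gg D k c) - 2 := by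
    have : (3:ℝ) ≤ (b - a)/(Gg D k c) := by
      rw [le_div_iff₀ hG0]; linarith
    linarith
  have h2 : 1*(del D k c) ≤ ((b - a)/(Gg D k c) - 2)*(del D k c) :=
    mul_le_mul_of_nonneg_right h1 hdel0
  linarith

def negSet (I : Set ℝ) : Set ℝ := {t | -t ∈ I}

lemma negSet_ordConn (hI : I.OrdConnected) : (negSet I).OrdConnected := by
  constructor
  intro x hx y hy z hz
  have h : -z ∈ Icc (-y) (-x) := ⟨by linarith [hz.2], by linarith [hz.1]⟩
  exact hI.out hy hx h

lemma negImage (γ : ℝ → X) (s t : ℝ) :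
    (fun r => γ (-r)) '' Icc s t = γ '' Icc (-t) (-s) := by
  ext z
  constructor
  · rintro ⟨r, hr, rfl⟩
    exact ⟨-r, ⟨by linarith [hr.2], by linarith [hr.1]⟩, rfl⟩
  · rintro ⟨r, hr, rfl⟩
    exact ⟨-r, ⟨by linarith [hr.2], by linarith [hr.1]⟩, by simp⟩

lemma negImageI (γ : ℝ → X) (I : Set ℝ) :
    (fun r => γ (-r)) '' negSet I = γ '' I := by
  ext z
  constructor
  · rintro ⟨r, hr, rfl⟩
    exact ⟨-r, hr, rfl⟩
  · rintro ⟨r, hr, rfl⟩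
    refine ⟨-r, ?_, by simp⟩
    show -(-r) ∈ I
    simpa using hr

lemma rev_hyp {L : ℝ} (hγ : IsLocalSCQuasiGeodesic L D k c γ I) :
    IsLocalSCQuasiGeodesic L D k c (fun r => γ (-r)) (negSet I) := by
  intro s t hst hsubst hlen
  have hsub2 : Icc (-t) (-s) ⊆ I := by
    intro z hz
    have h : -z ∈ Icc s t := ⟨by linarith [hz.2], by linarith [hz.1]⟩
    have h2 := hsubst h
    show z ∈ I
    simpa [negSet] using h2
  obtain ⟨hq, hcon⟩ := hγ (-t) (-s) (by linarith) hsub2 (by linarith)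
  constructor
  · intro s' hs' t' ht'
    have h := hq (-s') ⟨by linarith [hs'.2], by linarith [hs'.1]⟩
      (-t') ⟨by linarith [ht'.2], by linarith [ht'.1]⟩
    have habs : |(-s') - (-t')| = |s' - t'| := by
      rw [abs_sub_comm]
      congr 1
      ring
    rw [habs] at h
    exact h
  · rw [negImage]
    exact hcon

lemma loc_pair (hX : IsGeodesicSpace X) (hD : 0 ≤ D) (hk : 1 ≤ k) (hc : 0 ≤ c)
    (hI : I.OrdConnected) (hγ : IsLocalSCQuasiGeodesic (Ll D k c) D k c γ I)
    {z z' : X} (hzz : dist z z' ≤ 4)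
    {u u' : ℝ} (hu : u ∈ I) (hu' : u' ∈ I)
    (hyu : γ u ∈ coarseProj (γ '' I) z) (hyu' : γ u' ∈ coarseProj (γ '' I) z') :
    |u - u'| ≤ 3*(Gg D k c) := by
  have key : ∀ (γ₀ : ℝ → X) (I₀ : Set ℝ), I₀.OrdConnected →
      IsLocalSCQuasiGeodesic (Ll D k c) D k c γ₀ I₀ → γ₀ '' I₀ = γ '' I →
      ∀ w w' : ℝ, w ∈ I₀ → w' ∈ I₀ → w ≤ w' →
      γ₀ w ∈ coarseProj (γ '' I) z → γ₀ w' ∈ coarseProj (γ '' I) z' →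
      w' - w ≤ 3*(Gg D k c) := by
    intro γ₀ I₀ hI₀ hγ₀ himg w w' hw hw' hww hyw hyw'
    apply loc hX hD hk hc hI₀ hγ₀ z (σ := 9) (by norm_num) (by norm_num) hw hw' hww
    · intro v hv
      have hvI : v ∈ I₀ := hI₀.out hw hw' hv
      have h1 : Metric.infDist z (γ '' I) ≤ dist z (γ₀ v) := by
        rw [← himg]
        exact Metric.infDist_le_dist_of_mem ⟨v, hvI, rfl⟩
      have h2 : dist z (γ₀ w) ≤ Metric.infDist z (γ '' I) + 1 := hyw.2
      linarith
    · have h1 : dist z (γ₀ w') ≤ dist z z' + dist z' (γ₀ w') := dist_triangle _ _ _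
      have h2 : dist z' (γ₀ w') ≤ Metric.infDist z' (γ '' I) + 1 := hyw'.2
      have h3 : Metric.infDist z' (γ '' I) ≤ Metric.infDist z (γ '' I) + dist z' z :=
        Metric.infDist_le_infDist_add_dist
      have h4 : Metric.infDist z (γ '' I) ≤ dist z (γ₀ w) := by
        rw [← himg]
        exact Metric.infDist_le_dist_of_mem ⟨w, hw, rfl⟩
      rw [dist_comm z' z] at h3
      linarith
  rcases le_total u u' with h | h
  · have := key γ I hI hγ rfl u u' hu hu' h hyu hyu'
    rw [abs_of_nonpos (by linarith)]
    linarith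
  · have hmem : -u ∈ negSet I := by show -(-u) ∈ I; simpa using hu
    have hmem' : -u' ∈ negSet I := by show -(-u') ∈ I; simpa using hu'
    have := key (fun r => γ (-r)) (negSet I) (negSet_ordConn hI) (rev_hyp hγ)
      (negImageI γ I) (-u) (-u') hmem hmem' (by linarith)
      (by simpa using hyu) (by simpa using hyu')
    rw [abs_of_nonneg (by linarith)]
    linarith

lemma chain (hX : IsGeodesicSpace X) (hD : 0 ≤ D) (hk : 1 ≤ k) (hc : 0 ≤ c)
    (hI : I.OrdConnected) (hγ : IsLocalSCQuasiGeodesic (Ll D k c) D k c γ I) :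
    ∀ n : ℕ, ∀ z z' : X, dist z z' ≤ 4*n →
      ∀ u u' : ℝ, u ∈ I → u' ∈ I →
      γ u ∈ coarseProj (γ '' I) z → γ u' ∈ coarseProj (γ '' I) z' →
      |u - u'| ≤ ((n:ℝ)+1)*(3*(Gg D k c)) := by
  have hG1 := hGg1 hD hk hc
  intro n
  induction n with
  | zero =>
    intro z z' hzz u u' hu hu' h1 h2
    have hz4 : dist z z' ≤ 4 := by push_cast at hzz; linarith
    have := loc_pair hX hD hk hc hI hγ hz4 hu hu' h1 h2
    push_cast
    linarith
  | succ n ih =>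
    intro z z' hzz u u' hu hu' h1 h2
    by_cases hsmall : dist z z' ≤ 4
    · have := loc_pair hX hD hk hc hI hγ hsmall hu hu' h1 h2
      push_cast
      nlinarith [Nat.cast_nonneg (α := ℝ) n]
    · push_neg at hsmall
      obtain ⟨mpt, hm1, hm2⟩ := geo_pt hX z z' (ρ := 4) (by norm_num) (by linarith)
      have hYne : (γ '' I).Nonempty := ⟨γ u, u, hu, rfl⟩
      obtain ⟨ym, hym⟩ := cp_nonempty hYne mpt
      obtain ⟨um, humI, humeq⟩ := hym.1
      rw [← humeq] at hym
      have p1 := loc_pair hX hD hk hc hI hγ (le_of_eq hm1) hu humI h1 hym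
      have p2 : |um - u'| ≤ ((n:ℝ)+1)*(3*(Gg D k c)) := by
        apply ih mpt z' _ um u' humI hu' hym h2
        push_cast at hzz
        linarith
      have habs := abs_sub_le u um u'
      push_cast
      push_cast at p2
      nlinarith
  
end Loc


section Dyad

variable {X : Type u} [MetricSpace X] {D k c : ℝ} {γ : ℝ → X} {I : Set ℝ}

lemma dyad (hX : IsGeodesicSpace X) (hD : 0 ≤ D) (hk : 1 ≤ k) (hc : 0 ≤ c)
    (hI : I.OrdConnected) (hγ : IsLocalSCQuasiGeodesic (Ll D k c) D k c γ I) :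
    ∀ n : ℕ, ∀ z z' : X, dist z z' ≤ 4*2^n →
      dist z z' ≤ Metric.infDist z (γ '' I) - 4 →
      ∀ u u' : ℝ, u ∈ I → u' ∈ I →
      γ u ∈ coarseProj (γ '' I) z → γ u' ∈ coarseProj (γ '' I) z' →
      |u - u'| ≤ Ps D k c := by
  have hG1 := hGg1 hD hk hc
  have h3GP := hPs0 hD hk hc
  have hkDP : k*(D + c) ≤ Ps D k c := by unfold Ps; nlinarith
  intro n
  induction n with
  | zero =>
    intro z z' h1 h2 u u' hu hu' hy hy'
    have hz4 : dist z z' ≤ 4 := by norm_num at h1; linarith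
    have := loc_pair hX hD hk hc hI hγ hz4 hu hu' hy hy'
    linarith
  | succ n ih =>
    intro z z' h1 h2 u u' hu hu' hy hy'
    by_cases hsm : dist z z' ≤ 4*2^n
    · exact ih z z' hsm h2 u u' hu hu' hy hy'
    · push_neg at hsm
      have hpow1 : (1:ℝ) ≤ 2^n := one_le_pow₀ (by norm_num)
      have hd4 : (4:ℝ) ≤ dist z z' := by nlinarith
      have hd0 : (0:ℝ) ≤ dist z z' := dist_nonneg
      obtain ⟨mpt, hm1, hm2⟩ := geo_pt hX z z' (ρ := dist z z' / 2)
        (by positivity) (by linarith)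
      have hm2' : dist mpt z' = dist z z' / 2 := by rw [hm2]; ring
      have hYne : (γ '' I).Nonempty := ⟨γ u, u, hu, rfl⟩
      have hinfz : dist z z' + 4 ≤ Metric.infDist z (γ '' I) := by linarith
      have hinfm : Metric.infDist z (γ '' I) - dist z z'/2 ≤
          Metric.infDist mpt (γ '' I) := by
        have h := Metric.infDist_le_infDist_add_dist (x := z) (y := mpt)
          (s := γ '' I)
        rw [hm1] at h
        linarith
      obtain ⟨ym, hym⟩ := cp_nonempty hYne mpt
      obtain ⟨um, humI, humeq⟩ := hym.1
      rw [← humeq] at hym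
      have hhalf : dist z z' / 2 ≤ 4*2^n := by
        have : (4:ℝ)*2^(n+1) = 8*2^n := by ring
        rw [this] at h1
        linarith
      have q1 : |u - um| ≤ Ps D k c := by
        apply ih z mpt _ _ u um hu humI hy hym
        · rw [hm1]; exact hhalf
        · rw [hm1]; linarith
      have q2 : |um - u'| ≤ Ps D k c := by
        apply ih mpt z' _ _ um u' humI hu' hym hy'
        · rw [hm2']; exact hhalf
        · rw [hm2']; linarith
      have habs : |u - u'| ≤ 2*(Ps D k c) := by
        have := abs_sub_le u um u'
        linarith
      -- window contraction re-compression
      have hminI : min u u' ∈ I := by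
        rcases min_choice u u' with h | h <;> rw [h] <;> assumption
      have hmaxI : max u u' ∈ I := by
        rcases max_choice u u' with h | h <;> rw [h] <;> assumption
      have hsubW : Icc (min u u') (max u u') ⊆ I := hI.out hminI hmaxI
      have hlenW : max u u' - min u u' ≤ Ll D k c := by
        rw [max_sub_min_eq_abs, abs_sub_comm]
        have e1 := hLbig hD hk hc
        have e2 := hGg1 hD hk hc
        have e3 := hPs0 hD hk hc
        linarith
      have hconW := (hγ (min u u') (max u u') min_le_max hsubW hlenW).2
      have hWsub : γ '' Icc (min u u') (max u u') ⊆ γ '' I := Set.image_mono hsubW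
      have hdisj : Disjoint (Metric.closedBall z (Metric.infDist z (γ '' I) - 1))
          (γ '' Icc (min u u') (max u u')) := by
        rw [Set.disjoint_left]
        intro w hw hwW
        have hA : Metric.infDist z (γ '' I) ≤ dist z w :=
          Metric.infDist_le_dist_of_mem (hWsub hwW)
        have hB : dist w z ≤ Metric.infDist z (γ '' I) - 1 := Metric.mem_closedBall.1 hw
        rw [dist_comm] at hB
        linarith
      have hzball : z ∈ Metric.closedBall z (Metric.infDist z (γ '' I) - 1) :=
        Metric.mem_closedBall.2 (by rw [dist_self]; linarith)
      have hz'ball : z' ∈ Metric.closedBall z (Metric.infDist z (γ '' I) - 1) :=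
        Metric.mem_closedBall.2 (by rw [dist_comm]; linarith)
      have hyW : γ u ∈ coarseProj (γ '' Icc (min u u') (max u u')) z :=
        cp_subset hWsub hy ⟨u, ⟨min_le_left u u', le_max_left u u'⟩, rfl⟩
      have hyW' : γ u' ∈ coarseProj (γ '' Icc (min u u') (max u u')) z' :=
        cp_subset hWsub hy' ⟨u', ⟨min_le_right u u', le_max_right u u'⟩, rfl⟩
      have hDD := hconW z (Metric.infDist z (γ '' I) - 1) hdisj z hzball z' hz'ball
        (γ u) hyW (γ u') hyW'
      exact le_trans (param_close hk hc hI hγ hminI hmaxI hlenW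
        ⟨min_le_left u u', le_max_left u u'⟩ ⟨min_le_right u u', le_max_right u u'⟩
        hD hDD) hkDP

end Dyad

section Upper

variable {X : Type u} [MetricSpace X] {D k c : ℝ} {γ : ℝ → X} {I : Set ℝ}

lemma upper_chain (hD : 0 ≤ D) (hk : 1 ≤ k) (hc : 0 ≤ c)
    (hI : I.OrdConnected) (hγ : IsLocalSCQuasiGeodesic (Ll D k c) D k c γ I) :
    ∀ n : ℕ, ∀ s t : ℝ, s ∈ I → t ∈ I → s ≤ t → t - s ≤ n →
      dist (γ s) (γ t) ≤ (k + c)*(t - s) + c := by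
  have hL1' := hL1 hD hk hc
  intro n
  induction n with
  | zero =>
    intro s t hs ht hst hn
    push_cast at hn
    have hts : s = t := le_antisymm hst (by linarith)
    rw [hts, dist_self]
    nlinarith
  | succ n ih =>
    intro s t hs ht hst hn
    push_cast at hn
    by_cases hsmall : t - s ≤ 1
    · have h := winQG_up hI hγ hs ht hst (by linarith)
      nlinarith [mul_nonneg hc (show (0:ℝ) ≤ t - s by linarith)]
    · push_neg at hsmall
      have hs1 : s + 1 ∈ I := hI.out hs ht ⟨by linarith, by linarith⟩
      have h1 := winQG_up hI hγ hs hs1 (by linarith) (by linarith)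
      have heq : s + 1 - s = 1 := by ring
      rw [heq] at h1
      have h2 := ih (s+1) t hs1 ht (by linarith) (by linarith)
      have htr := dist_triangle (γ s) (γ (s+1)) (γ t)
      nlinarith

end Upper


section Final

variable {X : Type u} [MetricSpace X] {D k c : ℝ} {γ : ℝ → X} {I : Set ℝ}

lemma part2 (hX : IsGeodesicSpace X) (hD : 0 ≤ D) (hk : 1 ≤ k) (hc : 0 ≤ c)
    (hI : I.OrdConnected) (hγ : IsLocalSCQuasiGeodesic (Ll D k c) D k c γ I) :
    IsStronglyContracting D (γ '' I) := by
  intro ctr rad hdisj x₁ hx₁ x₂ hx₂ y₁ hy₁ y₂ hy₂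
  obtain ⟨u₁, hu₁I, hu₁eq⟩ := hy₁.1
  obtain ⟨u₂, hu₂I, hu₂eq⟩ := hy₂.1
  rw [← hu₁eq] at hy₁ ⊢
  rw [← hu₂eq] at hy₂ ⊢
  have hYne : (γ '' I).Nonempty := ⟨γ u₁, u₁, hu₁I, rfl⟩
  have hx₁c : dist x₁ ctr ≤ rad := Metric.mem_closedBall.1 hx₁
  have hx₂c : dist x₂ ctr ≤ rad := Metric.mem_closedBall.1 hx₂
  have hrad0 : 0 ≤ rad := le_trans dist_nonneg hx₁c
  have hinfc : rad ≤ Metric.infDist ctr (γ '' I) := by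
    apply le_infDist' hYne
    intro w hw
    have h1 : w ∉ Metric.closedBall ctr rad := (Set.disjoint_right.1 hdisj) hw
    have h2 : ¬ dist w ctr ≤ rad := fun hcc => h1 (Metric.mem_closedBall.2 hcc)
    push_neg at h2
    rw [dist_comm]
    linarith
  have hG1 := hGg1 hD hk hc
  have hPs0' := hPs0 hD hk hc
  have hgap : |u₁ - u₂| ≤ 2*(Ps D k c) + 36*(Gg D k c) := by
    by_cases hbig : rad ≤ 8
    · have hd : dist x₁ x₂ ≤ 4*((4:ℕ):ℝ) := by
        have htr := dist_triangle x₁ ctr x₂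
        rw [dist_comm ctr x₂] at htr
        push_cast
        linarith
      have hch := chain hX hD hk hc hI hγ 4 x₁ x₂ hd u₁ u₂ hu₁I hu₂I hy₁ hy₂
      push_cast at hch
      nlinarith
    · push_neg at hbig
      have mk : ∀ x : X, dist x ctr ≤ rad →
          ∃ z : X, dist x z ≤ 8 ∧ dist ctr z ≤ rad - 8 := by
        intro x hx
        by_cases hcase : dist x ctr ≤ rad - 8
        · refine ⟨x, by rw [dist_self]; norm_num, by rw [dist_comm]; exact hcase⟩
        · push_neg at hcase
          obtain ⟨z, hz1, hz2⟩ := geo_pt hX ctr x (ρ := rad - 8) (by linarith)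
            (by rw [dist_comm]; linarith)
          refine ⟨z, ?_, le_of_eq hz1⟩
          rw [dist_comm]
          rw [hz2, dist_comm ctr x]
          linarith
      obtain ⟨z₁, hz₁a, hz₁b⟩ := mk x₁ hx₁c
      obtain ⟨z₂, hz₂a, hz₂b⟩ := mk x₂ hx₂c
      obtain ⟨w₁, hw₁⟩ := cp_nonempty hYne z₁
      obtain ⟨v₁, hv₁I, hv₁eq⟩ := hw₁.1
      rw [← hv₁eq] at hw₁
      obtain ⟨w₂, hw₂⟩ := cp_nonempty hYne z₂
      obtain ⟨v₂, hv₂I, hv₂eq⟩ := hw₂.1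
      rw [← hv₂eq] at hw₂
      obtain ⟨wc, hwc⟩ := cp_nonempty hYne ctr
      obtain ⟨vc, hvcI, hvceq⟩ := hwc.1
      rw [← hvceq] at hwc
      have hch1 : |u₁ - v₁| ≤ ((2:ℕ)+1)*(3*(Gg D k c)) := by
        apply chain hX hD hk hc hI hγ 2 x₁ z₁ (by push_cast; linarith) u₁ v₁ hu₁I hv₁I hy₁ hw₁
      have hch2 : |u₂ - v₂| ≤ ((2:ℕ)+1)*(3*(Gg D k c)) := by
        apply chain hX hD hk hc hI hγ 2 x₂ z₂ (by push_cast; linarith) u₂ v₂ hu₂I hv₂I hy₂ hw₂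
      obtain ⟨n₀, hn₀⟩ := exists_nat_ge rad
      have hpow : rad ≤ 4*(2:ℝ)^n₀ := by
        have h1 : (n₀:ℝ) < 2^n₀ := by
          exact_mod_cast Nat.lt_two_pow_self (n := n₀)
        have h2 : (1:ℝ) ≤ 2^n₀ := one_le_pow₀ (by norm_num)
        nlinarith
      have hdy1 : |vc - v₁| ≤ Ps D k c := by
        apply dyad hX hD hk hc hI hγ n₀ ctr z₁ (by linarith) _ vc v₁ hvcI hv₁I hwc hw₁
        linarith
      have hdy2 : |vc - v₂| ≤ Ps D k c := by
        apply dyad hX hD hk hc hI hγ n₀ ctr z₂ (by linarith) _ vc v₂ hvcI hv₂I hwc hw₂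
        linarith
      have e1 := abs_sub_le u₁ v₁ vc
      have e2 := abs_sub_le (v₁ : ℝ) vc v₂
      have e3 := abs_sub_le u₁ vc u₂
      have e4 := abs_sub_le u₂ v₂ vc
      have e5 : |v₁ - vc| = |vc - v₁| := abs_sub_comm _ _
      have e6 : |v₂ - vc| = |vc - v₂| := abs_sub_comm _ _
      have e7 : |vc - u₂| = |u₂ - vc| := abs_sub_comm _ _
      push_cast at hch1 hch2
      linarith
  -- final window
  have hminI : min u₁ u₂ ∈ I := by
    rcases min_choice u₁ u₂ with h | h <;> rw [h] <;> assumption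
  have hmaxI : max u₁ u₂ ∈ I := by
    rcases max_choice u₁ u₂ with h | h <;> rw [h] <;> assumption
  have hsubW : Icc (min u₁ u₂) (max u₁ u₂) ⊆ I := hI.out hminI hmaxI
  have hlenW : max u₁ u₂ - min u₁ u₂ ≤ Ll D k c := by
    rw [max_sub_min_eq_abs, abs_sub_comm]
    have e1 := hLbig hD hk hc
    linarith
  have hconW := (hγ (min u₁ u₂) (max u₁ u₂) min_le_max hsubW hlenW).2
  have hWsub : γ '' Icc (min u₁ u₂) (max u₁ u₂) ⊆ γ '' I := Set.image_mono hsubW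
  have hdisjW : Disjoint (Metric.closedBall ctr rad)
      (γ '' Icc (min u₁ u₂) (max u₁ u₂)) := hdisj.mono_right hWsub
  exact hconW ctr rad hdisjW x₁ hx₁ x₂ hx₂
    (γ u₁) (cp_subset hWsub hy₁ ⟨u₁, ⟨min_le_left u₁ u₂, le_max_left u₁ u₂⟩, rfl⟩)
    (γ u₂) (cp_subset hWsub hy₂ ⟨u₂, ⟨min_le_right u₁ u₂, le_max_right u₁ u₂⟩, rfl⟩)

lemma globalQG (hX : IsGeodesicSpace X) (hD : 0 ≤ D) (hk : 1 ≤ k) (hc : 0 ≤ c)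
    (hI : I.OrdConnected) (hγ : IsLocalSCQuasiGeodesic (Ll D k c) D k c γ I) :
    IsQuasiGeodesicOn (kk k c) (cc D k c) γ I := by
  have hG1 := hGg1 hD hk hc
  have hG0 : (0:ℝ) < Gg D k c := by linarith
  have hkk0 : (0:ℝ) < kk k c := by unfold kk; linarith
  have hC60' := hC60 hD hk hc
  have hdel1' := hdel1 hD hk hc
  have hdelR' := hdelR hD hk hc
  have hL1' := hL1 hD hk hc
  have hR0 := hRr0 hD hk hc
  have hccbig : 2*(del D k c) + C6 D k c ≤ cc D k c := by
    unfold cc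
    linarith
  have hccc : c ≤ cc D k c := by
    unfold cc
    linarith
  have aux : ∀ s t : ℝ, s ∈ I → t ∈ I → s ≤ t →
      ((1/(kk k c))*(t - s) - cc D k c ≤ dist (γ s) (γ t) ∧
        dist (γ s) (γ t) ≤ (kk k c)*(t-s) + cc D k c) := by
    intro s t hs ht hst
    have hT0 : (0:ℝ) ≤ t - s := by linarith
    constructor
    · have h := blocks_main hX hD hk hc hI hγ (γ s) 0 le_rfl (by norm_num) hs ht hst
        (fun v _ => by
          rw [dist_self]
          linarith [dist_nonneg (x := γ s) (y := γ v)]) t ⟨hst, le_rfl⟩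
      rw [dist_self] at h
      have h1 : (t-s)*(Gg D k c) ≤ (t-s)*((kk k c)*(del D k c)) :=
        mul_le_mul_of_nonneg_left (hGdel hD hk hc) hT0
      have h2 : (1/(kk k c))*(t-s) ≤ ((t-s)/(Gg D k c))*(del D k c) := by
        have e1 : (1/(kk k c))*(t-s) = (t-s)/(kk k c) := by ring
        have e2 : ((t-s)/(Gg D k c))*(del D k c) = ((t-s)*(del D k c))/(Gg D k c) := by
          ring
        rw [e1, e2, div_le_div_iff₀ hkk0 hG0]
        nlinarith
      linarith
    · obtain ⟨n, hn⟩ := exists_nat_ge (t - s)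
      have h := upper_chain hD hk hc hI hγ n s t hs ht hst hn
      have hkkk : k + c ≤ kk k c := by unfold kk; linarith
      nlinarith
  intro s hs t ht
  rcases le_total s t with h | h
  · have haux := aux s t hs ht h
    rw [abs_of_nonpos (by linarith), neg_sub]
    exact haux
  · have haux := aux t s ht hs h
    rw [abs_of_nonneg (by linarith), dist_comm]
    exact haux

end Final

end LocSC

/-- Local-to-global for strong contraction: for all `D ≥ 0`, `k ≥ 1`, `c ≥ 0` there
are `L`, `k'`, `c'` depending only on `D, k, c` such that every
`(L; D; k, c)`-local strongly contracting quasi-geodesic in a geodesic metric space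
is a `(k', c')`-quasi-geodesic whose image is `D`-strongly contracting. -/
theorem local_strongly_contracting_to_global (D k c : ℝ)
    (hD : 0 ≤ D) (hk : 1 ≤ k) (hc : 0 ≤ c) :
    ∃ L k' c' : ℝ, 1 ≤ k' ∧ 0 ≤ c' ∧
      ∀ (X : Type u) [MetricSpace X], IsGeodesicSpace X →
        ∀ (I : Set ℝ) (γ : ℝ → X), I.OrdConnected →
          IsLocalSCQuasiGeodesic L D k c γ I →
          IsQuasiGeodesicOn k' c' γ I ∧ IsStronglyContracting D (γ '' I) := by
  refine ⟨LocSC.Ll D k c, LocSC.kk k c, LocSC.cc D k c,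
    by unfold LocSC.kk; linarith, ?_, ?_⟩
  · have h1 := LocSC.hL1 hD hk hc
    have h2 := LocSC.hRr0 hD hk hc
    have h3 := LocSC.hC60 hD hk hc
    unfold LocSC.cc
    linarith
  · intro X _ hX I γ hI hγ
    exact ⟨LocSC.globalQG hX hD hk hc hI hγ, LocSC.part2 hX hD hk hc hI hγ⟩
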